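/- Let m, b, k : ℝ with 0 < m, 0 < b, 0 < k, and let A, ω, φ : ℕ → ℝ with Summable (fun j => |A j|). Define g : ℝ → ℝ by g t = ∑' j, A j * Real.cos (ω j * t + φ j), and define P : ℝ → ℝ by P t = ∑' j, (A j / ((k - m * (ω j)^2)^2 + b^2 * (ω j)^2)) * ((k - m * (ω j)^2) * Real.cos (ω j * t + φ j) + b * (ω j) * Real.sin (ω j * t + φ j)). Then P solves the damped oscillator equation with forcing g: P is twice differentiable and m * deriv (deriv P) t + b * deriv P t + k * P t = g t for all t : ℝ. -/

import Mathlib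

open Filter Real

/-- `X` solves the damped oscillator equation `m ẍ + b ẋ + k x = g` with forcing `g`:
`X` is twice differentiable and the equation holds at every time `t`. -/
def SolvesDampedOsc (m b k : ℝ) (g : ℝ → ℝ) (X : ℝ → ℝ) : Prop :=
  Differentiable ℝ X ∧ Differentiable ℝ (deriv X) ∧
    ∀ t : ℝ, m * deriv (deriv X) t + b * deriv X t + k * X t = g t


lemma osc_exists_bound (m b k : ℝ) (hm : 0 < m) (hb : 0 < b) (hk : 0 < k) :
    ∃ C : ℝ, 0 ≤ C ∧ ∀ x : ℝ,
      (1 + |x| + x ^ 2) * (|k - m * x ^ 2| + |b * x|)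
        ≤ C * ((k - m * x ^ 2) ^ 2 + b ^ 2 * x ^ 2) := by
  set num : ℝ → ℝ := fun x => (1 + |x| + x ^ 2) * (|k - m * x ^ 2| + |b * x|) with hnumdef
  set den : ℝ → ℝ := fun x => (k - m * x ^ 2) ^ 2 + b ^ 2 * x ^ 2 with hdendef
  have hnum0 : ∀ x, 0 ≤ num x := fun x => by positivity
  have hden0 : ∀ x, 0 < den x := by
    intro x
    rcases eq_or_ne x 0 with h | h
    · simp [hdendef, h]; positivity
    · have : 0 < b ^ 2 * x ^ 2 := by positivity
      have : (0:ℝ) ≤ (k - m * x ^ 2) ^ 2 := sq_nonneg _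
      simp only [hdendef]
      nlinarith
  have hnumc : Continuous num := by
    apply Continuous.mul
    · exact (continuous_const.add continuous_abs).add (continuous_pow 2 )
    · exact ((continuous_const.sub (continuous_const.mul (continuous_pow 2))).abs).add
        ((continuous_const.mul continuous_id).abs)
  have hdenc : Continuous den := by
    exact ((continuous_const.sub (continuous_const.mul (continuous_pow 2))).pow 2).add
      (continuous_const.mul (continuous_pow 2))
  set r : ℝ := 2 * k / m + 1 with hrdef
  have hr1 : 1 ≤ r := by
    rw [hrdef]
    have : 0 ≤ 2 * k / m := by positivity
    linarith
  set s : ℝ := Real.sqrt r with hsdef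
  have hmem0 : (0:ℝ) ∈ Set.Icc (-s) s :=
    Set.mem_Icc.mpr ⟨neg_nonpos.mpr (Real.sqrt_nonneg r), Real.sqrt_nonneg r⟩
  obtain ⟨xM, _, hM⟩ := isCompact_Icc.exists_isMaxOn ⟨0, hmem0⟩ hnumc.continuousOn
  obtain ⟨xd, _, hd⟩ := isCompact_Icc.exists_isMinOn ⟨0, hmem0⟩ hdenc.continuousOn
  have hdpos : 0 < den xd := hden0 xd
  refine ⟨max (12 * (m + b) / m ^ 2) (num xM / den xd), le_trans (by positivity) (le_max_left _ _), ?_⟩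
  intro x
  by_cases hx : x ^ 2 ≤ r
  · have hxmem : x ∈ Set.Icc (-s) s := by
      have := Real.abs_le_sqrt hx
      exact Set.mem_Icc.mpr (abs_le.mp this)
    have h1 : num x ≤ num xM := hM hxmem
    have h2 : den xd ≤ den x := hd hxmem
    have hratio : 0 ≤ num xM / den xd := div_nonneg (hnum0 xM) hdpos.le
    calc num x ≤ num xM := h1
      _ = num xM / den xd * den xd := by field_simp
      _ ≤ num xM / den xd * den x := mul_le_mul_of_nonneg_left (hd hxmem) hratio
      _ ≤ max (12 * (m + b) / m ^ 2) (num xM / den xd) * den x :=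
          mul_le_mul_of_nonneg_right (le_max_right _ _) (hden0 x).le
  · push_neg at hx
    have hmx : 2 * k + m ≤ m * x ^ 2 := by
      have : m * r ≤ m * x ^ 2 := mul_le_mul_of_nonneg_left hx.le hm.le
      have hmr : m * r = 2 * k + m := by rw [hrdef]; linear_combination (2 * k) * mul_inv_cancel₀ hm.ne'
      linarith
    have ha1 : 1 ≤ |x| := by
      nlinarith [sq_abs x, abs_nonneg x]
    have ha2 : |x| ≤ x ^ 2 := by nlinarith [sq_abs x]
    have habs1 : |k - m * x ^ 2| = m * x ^ 2 - k := by
      rw [abs_of_nonpos (by nlinarith)]; ring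
    have habs2 : |b * x| = b * |x| := by rw [abs_mul, abs_of_pos hb]
    have key : num x * m ^ 2 ≤ 12 * (m + b) * den x := by
      simp only [hnumdef, hdendef, habs1, habs2]
      have e1 : (1 + |x| + x ^ 2) * ((m * x ^ 2 - k) + b * |x|) ≤ 3 * (m + b) * (x ^ 2) ^ 2 := by
        have f1 : 1 + |x| + x ^ 2 ≤ 3 * x ^ 2 := by linarith [ha1.trans ha2]
        have f2 : (m * x ^ 2 - k) + b * |x| ≤ (m + b) * x ^ 2 := by nlinarith
        have f3 : (0:ℝ) ≤ (m * x ^ 2 - k) + b * |x| := by nlinarith [abs_nonneg x]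
        nlinarith [sq_nonneg x]
      have e2 : m ^ 2 * (x ^ 2) ^ 2 ≤ 4 * (k - m * x ^ 2) ^ 2 := by nlinarith
      nlinarith [sq_nonneg x, sq_nonneg (b * x), mul_le_mul_of_nonneg_left e2 (by positivity : (0:ℝ) ≤ 3 * (m + b))]
    have : num x ≤ 12 * (m + b) / m ^ 2 * den x := by
      rw [div_mul_eq_mul_div, le_div_iff₀ (by positivity)]
      linarith
    exact this.trans (mul_le_mul_of_nonneg_right (le_max_left _ _) (hden0 x).le)


noncomputable def oscF (m b k : ℝ) (A ω φ : ℕ → ℝ) (j : ℕ) (t : ℝ) : ℝ :=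
  A j / ((k - m * ω j ^ 2) ^ 2 + b ^ 2 * ω j ^ 2) *
    ((k - m * ω j ^ 2) * Real.cos (ω j * t + φ j) + b * ω j * Real.sin (ω j * t + φ j))

noncomputable def oscF1 (m b k : ℝ) (A ω φ : ℕ → ℝ) (j : ℕ) (t : ℝ) : ℝ :=
  A j / ((k - m * ω j ^ 2) ^ 2 + b ^ 2 * ω j ^ 2) *
    (ω j * (b * ω j * Real.cos (ω j * t + φ j) - (k - m * ω j ^ 2) * Real.sin (ω j * t + φ j)))

noncomputable def oscF2 (m b k : ℝ) (A ω φ : ℕ → ℝ) (j : ℕ) (t : ℝ) : ℝ :=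
  A j / ((k - m * ω j ^ 2) ^ 2 + b ^ 2 * ω j ^ 2) *
    (-(ω j ^ 2 * ((k - m * ω j ^ 2) * Real.cos (ω j * t + φ j)
        + b * ω j * Real.sin (ω j * t + φ j))))

lemma osc_main (m b k : ℝ) (hm : 0 < m) (hb : 0 < b) (hk : 0 < k)
    (A ω φ : ℕ → ℝ) (hA : Summable (fun j => |A j|))
    (hbd : ∃ C : ℝ, 0 ≤ C ∧ ∀ x : ℝ,
      (1 + |x| + x ^ 2) * (|k - m * x ^ 2| + |b * x|)
        ≤ C * ((k - m * x ^ 2) ^ 2 + b ^ 2 * x ^ 2)) :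
    SolvesDampedOsc m b k (fun t => ∑' j, A j * Real.cos (ω j * t + φ j))
      (fun t => ∑' j, oscF m b k A ω φ j t) := by
  obtain ⟨C, hC0, hC⟩ := hbd
  have hDpos : ∀ j, 0 < (k - m * ω j ^ 2) ^ 2 + b ^ 2 * ω j ^ 2 := by
    intro j
    rcases eq_or_ne (ω j) 0 with h | h
    · simp [h]; positivity
    · have h1 : 0 < b ^ 2 * ω j ^ 2 := by positivity
      nlinarith [sq_nonneg (k - m * ω j ^ 2)]
  -- generic bound
  have hgen : ∀ (j : ℕ) (r : ℝ),
      |r| ≤ (1 + |ω j| + ω j ^ 2) * (|k - m * ω j ^ 2| + |b * ω j|) →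
      ‖A j / ((k - m * ω j ^ 2) ^ 2 + b ^ 2 * ω j ^ 2) * r‖ ≤ C * |A j| := by
    intro j r hr
    have hD := hDpos j
    rw [Real.norm_eq_abs, abs_mul, abs_div, abs_of_pos hD]
    have h2 : |r| ≤ C * ((k - m * ω j ^ 2) ^ 2 + b ^ 2 * ω j ^ 2) := hr.trans (hC (ω j))
    calc |A j| / ((k - m * ω j ^ 2) ^ 2 + b ^ 2 * ω j ^ 2) * |r|
        ≤ |A j| / ((k - m * ω j ^ 2) ^ 2 + b ^ 2 * ω j ^ 2) *
            (C * ((k - m * ω j ^ 2) ^ 2 + b ^ 2 * ω j ^ 2)) := by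
          apply mul_le_mul_of_nonneg_left h2 (by positivity)
      _ = C * |A j| := by linear_combination (C * |A j|) * mul_inv_cancel₀ hD.ne'
  have habs : ∀ (α β cc ss : ℝ), |cc| ≤ 1 → |ss| ≤ 1 → |α * cc + β * ss| ≤ |α| + |β| := by
    intro α β cc ss h1 h2
    calc |α * cc + β * ss| ≤ |α * cc| + |β * ss| := abs_add_le _ _
      _ = |α| * |cc| + |β| * |ss| := by rw [abs_mul, abs_mul]
      _ ≤ |α| * 1 + |β| * 1 :=
          add_le_add (mul_le_mul_of_nonneg_left h1 (abs_nonneg _))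
            (mul_le_mul_of_nonneg_left h2 (abs_nonneg _))
      _ = |α| + |β| := by ring
  have hstep : ∀ j : ℕ, |k - m * ω j ^ 2| + |b * ω j|
      ≤ (1 + |ω j| + ω j ^ 2) * (|k - m * ω j ^ 2| + |b * ω j|) := by
    intro j
    nlinarith [mul_nonneg (add_nonneg (abs_nonneg (ω j)) (sq_nonneg (ω j)))
      (add_nonneg (abs_nonneg (k - m * ω j ^ 2)) (abs_nonneg (b * ω j)))]
  have hbF : ∀ j t, ‖oscF m b k A ω φ j t‖ ≤ C * |A j| := by
    intro j t
    apply hgen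
    exact (habs _ _ _ _ (Real.abs_cos_le_one _) (Real.abs_sin_le_one _)).trans (hstep j)
  have hbF1 : ∀ j t, ‖oscF1 m b k A ω φ j t‖ ≤ C * |A j| := by
    intro j t
    apply hgen
    have h1 : |b * ω j * Real.cos (ω j * t + φ j) - (k - m * ω j ^ 2) * Real.sin (ω j * t + φ j)|
        ≤ |k - m * ω j ^ 2| + |b * ω j| := by
      have := habs (b * ω j) (-(k - m * ω j ^ 2)) (Real.cos (ω j * t + φ j))
        (Real.sin (ω j * t + φ j)) (Real.abs_cos_le_one _) (Real.abs_sin_le_one _)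
      rw [abs_neg] at this
      calc |b * ω j * Real.cos (ω j * t + φ j) - (k - m * ω j ^ 2) * Real.sin (ω j * t + φ j)|
          = |b * ω j * Real.cos (ω j * t + φ j)
              + -(k - m * ω j ^ 2) * Real.sin (ω j * t + φ j)| := by ring_nf
        _ ≤ |b * ω j| + |k - m * ω j ^ 2| := this
        _ = |k - m * ω j ^ 2| + |b * ω j| := by ring
    rw [abs_mul]
    calc |ω j| * |b * ω j * Real.cos (ω j * t + φ j)
            - (k - m * ω j ^ 2) * Real.sin (ω j * t + φ j)|
        ≤ |ω j| * (|k - m * ω j ^ 2| + |b * ω j|) :=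
          mul_le_mul_of_nonneg_left h1 (abs_nonneg _)
      _ ≤ (1 + |ω j| + ω j ^ 2) * (|k - m * ω j ^ 2| + |b * ω j|) := by
          nlinarith [mul_nonneg (add_nonneg zero_le_one (sq_nonneg (ω j)))
            (add_nonneg (abs_nonneg (k - m * ω j ^ 2)) (abs_nonneg (b * ω j)))]
  have hbF2 : ∀ j t, ‖oscF2 m b k A ω φ j t‖ ≤ C * |A j| := by
    intro j t
    apply hgen
    have h1 := (habs (k - m * ω j ^ 2) (b * ω j) (Real.cos (ω j * t + φ j))
      (Real.sin (ω j * t + φ j)) (Real.abs_cos_le_one _) (Real.abs_sin_le_one _))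
    rw [abs_neg, abs_mul, abs_of_nonneg (sq_nonneg (ω j))]
    calc ω j ^ 2 * |(k - m * ω j ^ 2) * Real.cos (ω j * t + φ j)
            + b * ω j * Real.sin (ω j * t + φ j)|
        ≤ ω j ^ 2 * (|k - m * ω j ^ 2| + |b * ω j|) :=
          mul_le_mul_of_nonneg_left h1 (sq_nonneg _)
      _ ≤ (1 + |ω j| + ω j ^ 2) * (|k - m * ω j ^ 2| + |b * ω j|) := by
          nlinarith [mul_nonneg (add_nonneg zero_le_one (abs_nonneg (ω j)))
            (add_nonneg (abs_nonneg (k - m * ω j ^ 2)) (abs_nonneg (b * ω j)))]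
  -- derivatives
  have hlin : ∀ (j : ℕ) (t : ℝ), HasDerivAt (fun t : ℝ => ω j * t + φ j) (ω j) t := by
    intro j t
    simpa using ((hasDerivAt_id t).const_mul (ω j)).add_const (φ j)
  have hcos : ∀ (j : ℕ) (t : ℝ), HasDerivAt (fun t : ℝ => Real.cos (ω j * t + φ j))
      (-Real.sin (ω j * t + φ j) * ω j) t :=
    fun j t => (Real.hasDerivAt_cos _).comp t (hlin j t)
  have hsin : ∀ (j : ℕ) (t : ℝ), HasDerivAt (fun t : ℝ => Real.sin (ω j * t + φ j))
      (Real.cos (ω j * t + φ j) * ω j) t :=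
    fun j t => (Real.hasDerivAt_sin _).comp t (hlin j t)
  have hd1 : ∀ (j : ℕ) (t : ℝ), HasDerivAt (oscF m b k A ω φ j) (oscF1 m b k A ω φ j t) t := by
    intro j t
    have H := (((hcos j t).const_mul (k - m * ω j ^ 2)).add
      ((hsin j t).const_mul (b * ω j))).const_mul
      (A j / ((k - m * ω j ^ 2) ^ 2 + b ^ 2 * ω j ^ 2))
    refine H.congr_deriv ?_
    simp only [oscF1]
    ring
  have hd2 : ∀ (j : ℕ) (t : ℝ), HasDerivAt (oscF1 m b k A ω φ j) (oscF2 m b k A ω φ j t) t := by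
    intro j t
    have H := ((((hcos j t).const_mul (b * ω j)).sub
      ((hsin j t).const_mul (k - m * ω j ^ 2))).const_mul (ω j)).const_mul
      (A j / ((k - m * ω j ^ 2) ^ 2 + b ^ 2 * ω j ^ 2))
    refine H.congr_deriv ?_
    simp only [oscF2]
    ring
  -- summability
  have hu : Summable (fun j => C * |A j|) := hA.mul_left C
  have hsF : ∀ t, Summable (fun j => oscF m b k A ω φ j t) := by
    intro t
    apply Summable.of_abs
    exact hu.of_nonneg_of_le (fun j => abs_nonneg _) (fun j => hbF j t)
  have hsF1 : ∀ t, Summable (fun j => oscF1 m b k A ω φ j t) := by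
    intro t
    apply Summable.of_abs
    exact hu.of_nonneg_of_le (fun j => abs_nonneg _) (fun j => hbF1 j t)
  have hsF2 : ∀ t, Summable (fun j => oscF2 m b k A ω φ j t) := by
    intro t
    apply Summable.of_abs
    exact hu.of_nonneg_of_le (fun j => abs_nonneg _) (fun j => hbF2 j t)
  have hP1 : ∀ t : ℝ, HasDerivAt (fun t => ∑' j, oscF m b k A ω φ j t)
      (∑' j, oscF1 m b k A ω φ j t) t :=
    fun t => hasDerivAt_tsum hu (fun n y => hd1 n y) (fun n y => hbF1 n y) (hsF 0) t
  have hP2 : ∀ t : ℝ, HasDerivAt (fun t => ∑' j, oscF1 m b k A ω φ j t)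
      (∑' j, oscF2 m b k A ω φ j t) t :=
    fun t => hasDerivAt_tsum hu (fun n y => hd2 n y) (fun n y => hbF2 n y) (hsF1 0) t
  have hderivP : deriv (fun t => ∑' j, oscF m b k A ω φ j t)
      = fun t => ∑' j, oscF1 m b k A ω φ j t := funext fun t => (hP1 t).deriv
  refine ⟨fun t => (hP1 t).differentiableAt, ?_, ?_⟩
  · rw [hderivP]
    exact fun t => (hP2 t).differentiableAt
  · intro t
    rw [hderivP]
    have hdd : deriv (fun t => ∑' j, oscF1 m b k A ω φ j t) t
        = ∑' j, oscF2 m b k A ω φ j t := (hP2 t).deriv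
    rw [hdd]
    simp only []
    have hterm : ∀ j : ℕ, m * oscF2 m b k A ω φ j t + b * oscF1 m b k A ω φ j t
        + k * oscF m b k A ω φ j t = A j * Real.cos (ω j * t + φ j) := by
      intro j
      have hD := (hDpos j).ne'
      simp only [oscF, oscF1, oscF2]
      linear_combination (A j * Real.cos (ω j * t + φ j)) * mul_inv_cancel₀ hD
    calc m * ∑' j, oscF2 m b k A ω φ j t + b * ∑' j, oscF1 m b k A ω φ j t
          + k * ∑' j, oscF m b k A ω φ j t
        = (∑' j, m * oscF2 m b k A ω φ j t) + (∑' j, b * oscF1 m b k A ω φ j t)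
          + (∑' j, k * oscF m b k A ω φ j t) := by rw [tsum_mul_left, tsum_mul_left, tsum_mul_left]
      _ = ∑' j, (m * oscF2 m b k A ω φ j t + b * oscF1 m b k A ω φ j t
          + k * oscF m b k A ω φ j t) := by
          rw [Summable.tsum_add (((hsF2 t).mul_left m).add ((hsF1 t).mul_left b))
            ((hsF t).mul_left k),
            Summable.tsum_add ((hsF2 t).mul_left m) ((hsF1 t).mul_left b)]
      _ = ∑' j, A j * Real.cos (ω j * t + φ j) := tsum_congr hterm

/-- Superposition: the steady-state response of the damped oscillator to a quasi-periodic
forcing (an absolutely convergent sum of sinusoids) is the corresponding termwise-transformed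
quasi-periodic series. -/
theorem damped_osc_quasiperiodic_particular_solution
    (m b k : ℝ) (hm : 0 < m) (hb : 0 < b) (hk : 0 < k)
    (A ω φ : ℕ → ℝ) (hA : Summable (fun j => |A j|))
    (g : ℝ → ℝ) (hg : g = fun t => ∑' j, A j * Real.cos (ω j * t + φ j))
    (P : ℝ → ℝ)
    (hP : P = fun t => ∑' j,
      (A j / ((k - m * (ω j) ^ 2) ^ 2 + b ^ 2 * (ω j) ^ 2)) *
        ((k - m * (ω j) ^ 2) * Real.cos (ω j * t + φ j)
          + b * (ω j) * Real.sin (ω j * t + φ j))) :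
    SolvesDampedOsc m b k g P := by
  subst hg hP
  exact osc_main m b k hm hb hk A ω φ hA (osc_exists_bound m b k hm hb hk)
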